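/- Assume the Generalized Continuum Hypothesis (2^κ = κ⁺ for every infinite cardinal κ). Let X be a Tychonoff (completely regular T1) linearly Lindelöf topological space with tightness t(X) < ℵ_ω. Then every open cover of X has a countable subcover. -/

import Mathlib

open Set Cardinal Topology

universe u v

/-- A space is quasi-Lindelöf if every open cover has a countable subcover
(no separation axioms assumed). -/
def QuasiLindelofSp (X : Type u) [TopologicalSpace X] : Prop :=
  ∀ 𝒰 : Set (Set X), (∀ U ∈ 𝒰, IsOpen U) → ⋃₀ 𝒰 = Set.univ →
    ∃ 𝒱 ⊆ 𝒰, 𝒱.Countable ∧ ⋃₀ 𝒱 = Set.univ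

/-- Lindelöf in the sense of Engelking: regular (T3, including T1) and
every open cover has a countable subcover. -/
def EngLindelofSp (X : Type u) [TopologicalSpace X] : Prop :=
  RegularSpace X ∧ T1Space X ∧ QuasiLindelofSp X

/-- X is productively Lindelöf if X × Y is Lindelöf for every Lindelöf space Y. -/
def ProductivelyLindelofSp (X : Type u) [TopologicalSpace X] : Prop :=
  ∀ (Y : Type u) [TopologicalSpace Y], EngLindelofSp Y → EngLindelofSp (X × Y)

/-- X is productively quasi-Lindelöf if X × Y is quasi-Lindelöf for every Lindelöf space Y. -/
def ProductivelyQuasiLindelofSp (X : Type u) [TopologicalSpace X] : Prop :=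
  ∀ (Y : Type u) [TopologicalSpace Y], EngLindelofSp Y → QuasiLindelofSp (X × Y)

/-- X is powerfully Lindelöf if X^ω is Lindelöf. -/
def PowerfullyLindelofSp (X : Type u) [TopologicalSpace X] : Prop :=
  EngLindelofSp (ℕ → X)

/-- X is powerfully quasi-Lindelöf if X^ω is quasi-Lindelöf. -/
def PowerfullyQuasiLindelofSp (X : Type u) [TopologicalSpace X] : Prop :=
  QuasiLindelofSp (ℕ → X)

/-- Tightness of X is at most κ. -/
def TightnessLE (X : Type u) [TopologicalSpace X] (κ : Cardinal.{u}) : Prop :=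
  ∀ (A : Set X) (x : X), x ∈ closure A → ∃ B ⊆ A, #B ≤ κ ∧ x ∈ closure B

/-- X has countable tightness. -/
def CountableTightness (X : Type u) [TopologicalSpace X] : Prop :=
  ∀ (A : Set X) (x : X), x ∈ closure A → ∃ B ⊆ A, B.Countable ∧ x ∈ closure B

/-- The Lindelöf number of X is at most κ: every open cover has a subcover of size ≤ κ. -/
def LindelofNumberLE (X : Type u) [TopologicalSpace X] (κ : Cardinal.{u}) : Prop :=
  ∀ 𝒰 : Set (Set X), (∀ U ∈ 𝒰, IsOpen U) → ⋃₀ 𝒰 = Set.univ →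
    ∃ 𝒱 ⊆ 𝒰, #𝒱 ≤ κ ∧ ⋃₀ 𝒱 = Set.univ

/-- The weight of X is at most κ: there is a base of size ≤ κ. -/
def WeightLE (X : Type u) [TopologicalSpace X] (κ : Cardinal.{u}) : Prop :=
  ∃ B : Set (Set X), TopologicalSpace.IsTopologicalBasis B ∧ #B ≤ κ

/-- N is a network for X. -/
def IsNetwork (X : Type u) [TopologicalSpace X] (N : Set (Set X)) : Prop :=
  ∀ (x : X) (U : Set X), IsOpen U → x ∈ U → ∃ n ∈ N, x ∈ n ∧ n ⊆ U

/-- X is linearly Lindelöf: regular (incl. T1) and every open cover linearly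
ordered by inclusion has a countable subcover. -/
def LinearlyLindelofSp (X : Type u) [TopologicalSpace X] : Prop :=
  RegularSpace X ∧ T1Space X ∧
    ∀ 𝒰 : Set (Set X), (∀ U ∈ 𝒰, IsOpen U) → IsChain (· ⊆ ·) 𝒰 → ⋃₀ 𝒰 = Set.univ →
      ∃ 𝒱 ⊆ 𝒰, 𝒱.Countable ∧ ⋃₀ 𝒱 = Set.univ

/-- U ⊆ X^ω is a basic open set: a product of open sets, all but finitely many of
which equal X. -/
def IsBasicOpen (X : Type u) [TopologicalSpace X] (U : Set (ℕ → X)) : Prop :=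
  ∃ V : ℕ → Set X, (∀ i, IsOpen (V i)) ∧ {i | V i ≠ Set.univ}.Finite ∧
    U = Set.pi Set.univ V

/-- A family of subsets of Z is point-κ if every point belongs to at most κ members. -/
def PointLE {Z : Type u} (𝒲 : Set (Set Z)) (κ : Cardinal.{u}) : Prop :=
  ∀ z : Z, #({W ∈ 𝒲 | z ∈ W}) ≤ κ

/-- A non-empty space is zero-dimensional if it is T1 and has a base of clopen sets. -/
def ZeroDimensionalSp (Y : Type u) [TopologicalSpace Y] : Prop :=
  Nonempty Y ∧ T1Space Y ∧
    ∃ B : Set (Set Y), TopologicalSpace.IsTopologicalBasis B ∧ ∀ b ∈ B, IsClopen b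

/-! ### Auxiliary lemmas for stmt6 -/

noncomputable instance aux_iwo (o : Ordinal.{u}) : IsWellOrder o.ToType (· < ·) :=
  isWellOrder_lt

/-- In the canonical well-order of type `μ.ord.ToType` with `μ` regular, every subset of
cardinality `< μ` is strictly bounded above. -/
lemma aux_bdd {μ : Cardinal.{u}} (hμ : μ.IsRegular) {S : Set μ.ord.ToType}
    (hS : #S < μ) : ∃ j, ∀ i ∈ S, i < j := by
  have h : #S < Order.cof μ.ord.ToType := by
    rwa [Ordinal.cof_toType, hμ.cof_ord]
  by_contra hc
  push_neg at hc
  exact absurd (Order.cof_le hc) (not_le.2 h)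

/-- In a regular space, the closure of a set of size at most `τ` can be covered by at most
`2 ^ τ` members of any open cover. -/
lemma aux_L1 {X : Type u} [TopologicalSpace X] [RegularSpace X] {γ : Set (Set X)}
    (hop : ∀ U ∈ γ, IsOpen U) (hcov : ⋃₀ γ = Set.univ) {B : Set X} {τ : Cardinal.{u}}
    (hB : #B ≤ τ) :
    ∃ 𝒮 ⊆ γ, #𝒮 ≤ 2 ^ τ ∧ closure B ⊆ ⋃₀ 𝒮 := by
  classical
  let P : Set (Set X) := {A | A ⊆ B ∧ ∃ U ∈ γ, closure A ⊆ U}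
  have hch : ∀ A : P, ∃ U ∈ γ, closure (A : Set X) ⊆ U := fun A => A.2.2
  choose u hu₁ hu₂ using hch
  refine ⟨Set.range u, ?_, ?_, ?_⟩
  · rintro _ ⟨A, rfl⟩; exact hu₁ A
  · refine mk_range_le.trans ?_
    have h1 : #P ≤ #(𝒫 B) := mk_le_mk_of_subset (fun A hA => hA.1)
    refine h1.trans ?_
    rw [mk_powerset]
    exact power_le_power_left two_ne_zero hB
  · intro x hx
    have hxU : x ∈ ⋃₀ γ := hcov.symm ▸ Set.mem_univ x
    obtain ⟨U, hUγ, hxU⟩ := hxU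
    obtain ⟨t, ht_nhds, ht_closed, htU⟩ :=
      exists_mem_nhds_isClosed_subset ((hop U hUγ).mem_nhds hxU)
    have hxV : x ∈ interior t := mem_interior_iff_mem_nhds.2 ht_nhds
    have hA : x ∈ closure (interior t ∩ B) := isOpen_interior.inter_closure ⟨hxV, hx⟩
    have hsub : closure (interior t ∩ B) ⊆ U :=
      (closure_mono Set.inter_subset_left).trans
        (((closure_mono interior_subset).trans_eq ht_closed.closure_eq).trans htU)
    have hP : (interior t ∩ B) ∈ P := ⟨Set.inter_subset_right, U, hUγ, hsub⟩
    exact ⟨u ⟨_, hP⟩, Set.mem_range_self _, hu₂ ⟨_, hP⟩ hA⟩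

/-- A linearly Lindelöf space (chain-cover property) has, for every family of points indexed by
the canonical order of a regular uncountable `μ`, a complete accumulation point. -/
lemma aux_cap {X : Type u} [TopologicalSpace X]
    (hch : ∀ 𝒰 : Set (Set X), (∀ U ∈ 𝒰, IsOpen U) → IsChain (· ⊆ ·) 𝒰 → ⋃₀ 𝒰 = Set.univ →
      ∃ 𝒱 ⊆ 𝒰, 𝒱.Countable ∧ ⋃₀ 𝒱 = Set.univ)
    {μ : Cardinal.{u}} (hμ : μ.IsRegular) (hμ₁ : ℵ₀ < μ)
    (a : μ.ord.ToType → X) :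
    ∃ x : X, ∀ U : Set X, IsOpen U → x ∈ U → ¬ #{i | a i ∈ U} < μ := by
  by_contra hcon
  push_neg at hcon
  choose U hU₁ hU₂ hU₃ using hcon
  let W : μ.ord.ToType → Set X := fun j => ⋃₀ {V | IsOpen V ∧ ∀ i, a i ∈ V → i ≤ j}
  have hWopen : ∀ j, IsOpen (W j) := fun j => isOpen_sUnion fun V hV => hV.1
  have hWmono : ∀ {j j' : μ.ord.ToType}, j ≤ j' → W j ⊆ W j' := by
    intro j j' h
    exact Set.sUnion_subset_sUnion fun V hV => ⟨hV.1, fun i hi => (hV.2 i hi).trans h⟩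
  have hWcov : ⋃₀ Set.range W = Set.univ := by
    refine Set.eq_univ_of_forall fun x => ?_
    obtain ⟨j, hj⟩ := aux_bdd hμ (hU₃ x)
    refine Set.mem_sUnion.2 ⟨W j, ⟨j, rfl⟩, ?_⟩
    refine Set.subset_sUnion_of_mem ?_ (hU₂ x)
    exact ⟨hU₁ x, fun i hi => (hj i hi).le⟩
  obtain ⟨𝒱, h𝒱sub, h𝒱cnt, h𝒱cov⟩ := hch (Set.range W)
    (by rintro _ ⟨j, rfl⟩; exact hWopen j)
    (by rintro _ ⟨j, rfl⟩ _ ⟨j', rfl⟩ _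
        rcases le_total j j' with h | h
        · exact Or.inl (hWmono h)
        · exact Or.inr (hWmono h)) hWcov
  have hex : ∀ V : 𝒱, ∃ j, (V : Set X) = W j := by
    intro V
    obtain ⟨j, hj⟩ := h𝒱sub V.2
    exact ⟨j, hj.symm⟩
  choose jf hjf using hex
  have h𝒱card : #𝒱 ≤ ℵ₀ := mk_le_aleph0_iff.2 (Set.countable_coe_iff.2 h𝒱cnt)
  have hJ : #(Set.range jf) < μ := mk_range_le.trans_lt (h𝒱card.trans_lt hμ₁)
  obtain ⟨j₀, hj₀⟩ := aux_bdd hμ hJ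
  have haj : a j₀ ∈ ⋃₀ 𝒱 := h𝒱cov.symm ▸ Set.mem_univ _
  obtain ⟨V, hV𝒱, haV⟩ := Set.mem_sUnion.1 haj
  have h2 : a j₀ ∈ W (jf ⟨V, hV𝒱⟩) := by
    rw [← hjf ⟨V, hV𝒱⟩]; exact haV
  obtain ⟨V', ⟨hV'open, hV'bound⟩, haV'⟩ := Set.mem_sUnion.1 h2
  exact absurd (hV'bound j₀ haV') (not_le.2 (hj₀ _ ⟨⟨V, hV𝒱⟩, rfl⟩))

/-- Key lemma: under GCH, in a linearly Lindelöf space of tightness at most `τ`, every open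
cover has a subcover of cardinality at most `2 ^ τ`. -/
lemma aux_main (hGCH : ∀ κ : Cardinal.{u}, ℵ₀ ≤ κ → 2 ^ κ = Order.succ κ)
    {X : Type u} [TopologicalSpace X] (hlin : LinearlyLindelofSp X)
    {τ : Cardinal.{u}} (hτ : ℵ₀ ≤ τ) (ht : TightnessLE X τ)
    {γ : Set (Set X)} (hop : ∀ U ∈ γ, IsOpen U) (hcov : ⋃₀ γ = Set.univ) :
    ∃ γ' ⊆ γ, #γ' ≤ 2 ^ τ ∧ ⋃₀ γ' = Set.univ := by
  classical
  haveI : RegularSpace X := hlin.1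
  by_contra hcon
  push_neg at hcon
  set κ : Cardinal.{u} := 2 ^ τ with hκdef
  have hκτ : τ ≤ κ := (cantor τ).le
  have hκinf : ℵ₀ ≤ κ := hτ.trans hκτ
  have hκκ : κ ^ τ = κ := by
    rw [hκdef, ← power_mul, mul_eq_self hτ]
  have hSex : ∀ B : {B : Set X // #B ≤ τ}, ∃ 𝒮 ⊆ γ, #𝒮 ≤ κ ∧ closure (B : Set X) ⊆ ⋃₀ 𝒮 :=
    fun B => aux_L1 hop hcov B.2
  choose S hS₁ hS₂ hS₃ using hSex
  let Γ : Set X → Set (Set X) := fun D =>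
    ⋃ B : {B : Set X // B ⊆ D ∧ #B ≤ τ}, S ⟨B.1, B.2.2⟩
  have hΓγ : ∀ D, Γ D ⊆ γ := fun D => Set.iUnion_subset fun B => hS₁ _
  have hΓmono : ∀ {D D' : Set X}, D ⊆ D' → Γ D ⊆ Γ D' := by
    intro D D' h x hx
    obtain ⟨B, hB⟩ := Set.mem_iUnion.1 hx
    exact Set.mem_iUnion.2 ⟨⟨B.1, B.2.1.trans h, B.2.2⟩, hB⟩
  have hΓcl : ∀ D : Set X, closure D ⊆ ⋃₀ Γ D := by
    intro D x hx
    obtain ⟨B, hBD, hBτ, hxB⟩ := ht D x hx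
    obtain ⟨w, hw, hxw⟩ := hS₃ ⟨B, hBτ⟩ hxB
    exact Set.mem_sUnion.2 ⟨w, Set.mem_iUnion.2 ⟨⟨B, hBD, hBτ⟩, hw⟩, hxw⟩
  have hΓcard : ∀ D : Set X, #D ≤ κ → #(Γ D) ≤ κ := by
    intro D hD
    rcases isEmpty_or_nonempty {B : Set X // B ⊆ D ∧ #B ≤ τ} with hI | hI
    · have : Γ D = ∅ := Set.iUnion_eq_empty.2 fun B => (hI.false B).elim
      rw [this]
      simp
    refine le_trans (mk_iUnion_le _) ?_
    have h1 : #{B : Set X // B ⊆ D ∧ #B ≤ τ} ≤ κ := by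
      refine le_trans (mk_bounded_subset_le D τ) ?_
      calc max #D ℵ₀ ^ τ ≤ κ ^ τ := power_le_power_right (max_le hD hκinf)
        _ = κ := hκκ
    have h2 : ⨆ B : {B : Set X // B ⊆ D ∧ #B ≤ τ}, #(S ⟨B.1, B.2.2⟩) ≤ κ :=
      ciSup_le' fun B => hS₂ _
    exact le_trans (mul_le_mul' h1 h2) (mul_eq_self hκinf).le
  rcases isEmpty_or_nonempty X with hX | hX
  · exact hcon ∅ (Set.empty_subset γ) (by simp)
      (Set.sUnion_empty.trans (Set.univ_eq_empty_iff.2 hX).symm)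
  have hpickex : ∀ D : Set X, #D ≤ κ → ∃ x, x ∉ ⋃₀ Γ D := by
    intro D hD
    by_contra h
    push_neg at h
    exact hcon (Γ D) (hΓγ D) (hΓcard D hD) (Set.eq_univ_of_forall h)
  let pick : Set X → X := fun D =>
    if h : ∃ x, x ∉ ⋃₀ Γ D then h.choose else Classical.arbitrary X
  have hpick : ∀ D : Set X, #D ≤ κ → pick D ∉ ⋃₀ Γ D := by
    intro D hD
    have h := hpickex D hD
    simp only [pick, dif_pos h]
    exact h.choose_spec
  set μ := Order.succ κ with hμdef
  have hμreg : μ.IsRegular := isRegular_succ hκinf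
  have hμ₁ : ℵ₀ < μ := hκinf.trans_lt (Order.lt_succ κ)
  let f : μ.ord.ToType → X := IsWellFounded.fix (· < ·)
    (fun j IH => pick (Set.range fun k : {k // k < j} => IH k.1 k.2))
  have hfeq : ∀ i, f i = pick (f '' Set.Iio i) := by
    intro i
    show IsWellFounded.fix _ _ i = _
    rw [IsWellFounded.fix_eq]
    congr 1
    ext x
    constructor
    · rintro ⟨k, rfl⟩
      exact ⟨k.1, k.2, rfl⟩
    · rintro ⟨k, hk, rfl⟩
      exact ⟨⟨k, hk⟩, rfl⟩
  have hcard : ∀ i : μ.ord.ToType, #(f '' Set.Iio i) ≤ κ := fun i =>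
    le_trans mk_image_le (Order.lt_succ_iff.1 (mk_Iio_ord_toType i))
  have hfnot : ∀ i, f i ∉ ⋃₀ Γ (f '' Set.Iio i) := by
    intro i
    rw [hfeq i]
    exact hpick _ (hcard i)
  have hfinj : Function.Injective f := by
    have key : ∀ {i j : μ.ord.ToType}, i < j → f i ≠ f j := by
      intro i j hij heq
      refine hfnot j ?_
      have : f i ∈ closure (f '' Set.Iio j) :=
        subset_closure (Set.mem_image_of_mem f hij)
      rw [heq] at this
      exact hΓcl _ this
    intro i j heq
    rcases lt_trichotomy i j with h | h | h
    · exact absurd heq (key h)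
    · exact h
    · exact absurd heq.symm (key h)
  obtain ⟨x, hx⟩ := aux_cap hlin.2.2 hμreg hμ₁ f
  have hxcl : x ∈ closure (Set.range f) := by
    rw [mem_closure_iff]
    intro U hU hxU
    have hbig := hx U hU hxU
    rcases Set.eq_empty_or_nonempty {i | f i ∈ U} with he | ⟨i, hi⟩
    · rw [he] at hbig
      simp only [Cardinal.mk_emptyCollection] at hbig
      exact absurd hμreg.pos hbig
    · exact ⟨f i, hi, Set.mem_range_self i⟩
  obtain ⟨B, hBsub, hBcard, hxB⟩ := ht (Set.range f) x hxcl
  have hScard : #{i | f i ∈ B} ≤ τ := by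
    have hinj : Function.Injective (fun i : {i | f i ∈ B} => (⟨f i.1, i.2⟩ : B)) := by
      intro i j h
      exact Subtype.ext (hfinj (congrArg Subtype.val h))
    exact (mk_le_of_injective hinj).trans hBcard
  obtain ⟨j, hj⟩ := aux_bdd hμreg (hScard.trans_lt (hκτ.trans_lt (Order.lt_succ κ)))
  have hBj : B ⊆ f '' Set.Iio j := by
    intro b hb
    obtain ⟨i, rfl⟩ := hBsub hb
    exact ⟨i, hj i hb, rfl⟩
  have hxU : x ∈ ⋃₀ Γ (f '' Set.Iio j) := hΓcl _ ((closure_mono hBj) hxB)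
  have hUopen : IsOpen (⋃₀ Γ (f '' Set.Iio j)) :=
    isOpen_sUnion fun U hU => hop U (hΓγ _ hU)
  have hfin : {i | f i ∈ ⋃₀ Γ (f '' Set.Iio j)} ⊆ Set.Iic j := by
    intro i hi
    rw [Set.mem_Iic]
    by_contra hgt
    push_neg at hgt
    refine hfnot i (Set.sUnion_subset_sUnion (hΓmono ?_) hi)
    exact Set.image_mono (Set.Iio_subset_Iio hgt.le)
  refine hx _ hUopen hxU (lt_of_le_of_lt (mk_le_mk_of_subset hfin) ?_)
  rw [← Set.Iio_insert]
  refine lt_of_le_of_lt mk_insert_le ?_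
  exact add_lt_of_lt hμreg.1 (mk_Iio_ord_toType j) (one_lt_aleph0.trans hμ₁)

/-- In a space with the chain-cover property, every open cover of cardinality at most `ℵ_n`
has a countable subcover. -/
lemma aux_L5 {X : Type u} [TopologicalSpace X]
    (hch : ∀ 𝒰 : Set (Set X), (∀ U ∈ 𝒰, IsOpen U) → IsChain (· ⊆ ·) 𝒰 → ⋃₀ 𝒰 = Set.univ →
      ∃ 𝒱 ⊆ 𝒰, 𝒱.Countable ∧ ⋃₀ 𝒱 = Set.univ) :
    ∀ (n : ℕ) (γ : Set (Set X)), (∀ U ∈ γ, IsOpen U) → ⋃₀ γ = Set.univ →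
      Cardinal.mk γ ≤ Cardinal.aleph n → ∃ 𝒱 ⊆ γ, 𝒱.Countable ∧ ⋃₀ 𝒱 = Set.univ := by
  intro n
  induction n with
  | zero =>
    intro γ hop hcov hcard
    refine ⟨γ, subset_rfl, ?_, hcov⟩
    rw [Nat.cast_zero, aleph_zero] at hcard
    exact Set.countable_coe_iff.1 (mk_le_aleph0_iff.1 hcard)
  | succ n IH =>
    intro γ hop hcov hcard
    classical
    rcases Set.eq_empty_or_nonempty γ with rfl | hne
    · exact ⟨∅, subset_rfl, Set.countable_empty, hcov⟩
    set μ := Cardinal.aleph ((n + 1 : ℕ) : Ordinal) with hμdef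
    have hμsucc : μ = Order.succ (Cardinal.aleph n) := by
      rw [hμdef, Nat.cast_succ, Ordinal.add_one_eq_succ, aleph_succ]
    have hμreg : μ.IsRegular := hμsucc ▸ isRegular_succ (aleph0_le_aleph _)
    have hμ₁ : ℵ₀ < μ := lt_of_le_of_lt (aleph0_le_aleph _)
      (hμsucc ▸ Order.lt_succ (Cardinal.aleph n))
    have hγι : #γ ≤ #(μ.ord.ToType) := by
      rw [Cardinal.mk_toType, Cardinal.card_ord]
      exact hcard
    obtain ⟨g⟩ := Cardinal.le_def _ _ |>.1 hγι
    let e : μ.ord.ToType → Set X := fun i =>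
      if h : ∃ A : γ, g A = i then (h.choose : Set X) else hne.choose
    have heγ : ∀ i, e i ∈ γ := by
      intro i
      simp only [e]
      split
      · exact (Subtype.coe_prop _)
      · exact hne.choose_spec
    have hee : ∀ (A : Set X) (hA : A ∈ γ), e (g ⟨A, hA⟩) = A := by
      intro A hA
      have hexA : ∃ B : γ, g B = g ⟨A, hA⟩ := ⟨⟨A, hA⟩, rfl⟩
      simp only [e, dif_pos hexA]
      have := g.injective hexA.choose_spec
      rw [this]
    let W : μ.ord.ToType → Set X := fun j => ⋃₀ (e '' Set.Iic j)
    have hWopen : ∀ j, IsOpen (W j) := by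
      rintro j
      refine isOpen_sUnion ?_
      rintro _ ⟨i, _, rfl⟩
      exact hop _ (heγ i)
    have hWmono : ∀ {j j' : μ.ord.ToType}, j ≤ j' → W j ⊆ W j' := by
      intro j j' h
      exact Set.sUnion_subset_sUnion (Set.image_mono (Set.Iic_subset_Iic.2 h))
    have hWcov : ⋃₀ Set.range W = Set.univ := by
      refine Set.eq_univ_of_forall fun x => ?_
      have : x ∈ ⋃₀ γ := hcov.symm ▸ Set.mem_univ x
      obtain ⟨A, hA, hxA⟩ := Set.mem_sUnion.1 this
      refine Set.mem_sUnion.2 ⟨W (g ⟨A, hA⟩), ⟨_, rfl⟩, ?_⟩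
      refine Set.mem_sUnion.2 ⟨A, ⟨g ⟨A, hA⟩, Set.self_mem_Iic, hee A hA⟩, hxA⟩
    obtain ⟨𝒱₀, h𝒱₀sub, h𝒱₀cnt, h𝒱₀cov⟩ := hch (Set.range W)
      (by rintro _ ⟨j, rfl⟩; exact hWopen j)
      (by rintro _ ⟨j, rfl⟩ _ ⟨j', rfl⟩ _
          rcases le_total j j' with h | h
          · exact Or.inl (hWmono h)
          · exact Or.inr (hWmono h)) hWcov
    have hex : ∀ V : 𝒱₀, ∃ j, (V : Set X) = W j := by
      intro V
      obtain ⟨j, hj⟩ := h𝒱₀sub V.2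
      exact ⟨j, hj.symm⟩
    choose jf hjf using hex
    have hJ : #(Set.range jf) < μ :=
      mk_range_le.trans_lt
        ((mk_le_aleph0_iff.2 (Set.countable_coe_iff.2 h𝒱₀cnt)).trans_lt hμ₁)
    obtain ⟨j₀, hj₀⟩ := aux_bdd hμreg hJ
    have hcov' : ⋃₀ (e '' Set.Iic j₀) = Set.univ := by
      refine Set.eq_univ_of_forall fun x => ?_
      have : x ∈ ⋃₀ 𝒱₀ := h𝒱₀cov.symm ▸ Set.mem_univ x
      obtain ⟨V, hV𝒱, hxV⟩ := Set.mem_sUnion.1 this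
      have h2 : x ∈ W (jf ⟨V, hV𝒱⟩) := by
        rw [← hjf ⟨V, hV𝒱⟩]; exact hxV
      exact hWmono (hj₀ _ ⟨⟨V, hV𝒱⟩, rfl⟩).le h2
    have hsubγ : e '' Set.Iic j₀ ⊆ γ := by
      rintro _ ⟨i, _, rfl⟩
      exact heγ i
    have hcard' : #(e '' Set.Iic j₀) ≤ Cardinal.aleph n := by
      refine Order.lt_succ_iff.1 ?_
      rw [← hμsucc]
      refine lt_of_le_of_lt mk_image_le ?_
      rw [← Set.Iio_insert]
      refine lt_of_le_of_lt mk_insert_le ?_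
      exact add_lt_of_lt hμreg.1 (mk_Iio_ord_toType j₀) (one_lt_aleph0.trans hμ₁)
    obtain ⟨𝒱, h𝒱sub, h𝒱cnt, h𝒱cov⟩ := IH (e '' Set.Iic j₀)
      (fun U hU => hop U (hsubγ hU)) hcov' hcard'
    exact ⟨𝒱, h𝒱sub.trans hsubγ, h𝒱cnt, h𝒱cov⟩

/-- Under GCH, every Tychonoff linearly Lindelöf space with tightness
less than ℵ_ω is Lindelöf. -/
theorem stmt6 (hGCH : ∀ κ : Cardinal.{u}, ℵ₀ ≤ κ → 2 ^ κ = Order.succ κ)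
    (X : Type u) [TopologicalSpace X] [T1Space X] [CompletelyRegularSpace X]
    (hlin : LinearlyLindelofSp X)
    (ht : ∃ κ : Cardinal.{u}, κ < Cardinal.aleph Ordinal.omega0 ∧ TightnessLE X κ) :
    QuasiLindelofSp X := by
  classical
  obtain ⟨κ₀, hκ₀lt, htight⟩ := ht
  have hτinf : ℵ₀ ≤ κ₀ ⊔ ℵ₀ := le_sup_right
  have hτlt : κ₀ ⊔ ℵ₀ < Cardinal.aleph Ordinal.omega0 := by
    refine max_lt hκ₀lt ?_
    rw [← aleph_zero]
    exact aleph_lt_aleph.2 Ordinal.omega0_pos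
  obtain ⟨o, ho⟩ := (mem_range_aleph_iff.2 hτinf).imp fun _ h => h.symm
  have holt : o < Ordinal.omega0 := aleph_lt_aleph.1 (ho ▸ hτlt)
  obtain ⟨n, rfl⟩ := Ordinal.lt_omega0.1 holt
  have htight' : TightnessLE X (Cardinal.aleph n) := by
    intro A x hx
    obtain ⟨B, hB, hBc, hxB⟩ := htight A x hx
    exact ⟨B, hB, hBc.trans ((le_sup_left : κ₀ ≤ κ₀ ⊔ ℵ₀).trans ho.le), hxB⟩
  intro 𝒰 hop hcov
  obtain ⟨γ', hγ'sub, hγ'card, hγ'cov⟩ :=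
    aux_main hGCH hlin (aleph0_le_aleph _) htight' hop hcov
  have h2 : (2 : Cardinal.{u}) ^ Cardinal.aleph (n : Ordinal)
      = Cardinal.aleph ((n + 1 : ℕ) : Ordinal) := by
    rw [hGCH _ (aleph0_le_aleph _), Nat.cast_succ, Ordinal.add_one_eq_succ, aleph_succ]
  obtain ⟨𝒱, h𝒱sub, h𝒱cnt, h𝒱cov⟩ := aux_L5 hlin.2.2 (n + 1) γ'
    (fun U hU => hop U (hγ'sub hU)) hγ'cov (by rw [← h2]; exact hγ'card)
  exact ⟨𝒱, h𝒱sub.trans hγ'sub, h𝒱cnt, h𝒱cov⟩
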